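/- For any permutation π of [n], the family N_π = (N_1, ..., N_n) defined by N_i = { j ∈ [n] : j ≤_i π^{-1}(j) } is a Grassmann necklace, i.e., all sets N_i have the same cardinality and N_i \ {i} ⊆ N_{i+1} for all i (indices mod n). -/

import Mathlib

open Finset

variable {n : ℕ} [NeZero n]

/-- Position of `x` in the cyclic order on `Fin n` starting at `i`. -/
def cpos (i x : Fin n) : ℕ := ((x - i : Fin n) : ℕ)

/-- `X ≪_i Y`: every element of `X \\ Y` precedes every element of `Y \\ X`
in the cyclic order starting at `i`. -/
def Ll (i : Fin n) (X Y : Finset (Fin n)) : Prop :=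
  ∀ x ∈ X \ Y, ∀ y ∈ Y \ X, cpos i x < cpos i y

/-- `X` and `Y` are weakly separated. -/
def WSep (X Y : Finset (Fin n)) : Prop := ∃ i : Fin n, Ll i X Y

/-- A Grassmann necklace in `C([n], r)`. -/
def IsNecklace (N : Fin n → Finset (Fin n)) (r : ℕ) : Prop :=
  (∀ i, (N i).card = r) ∧ ∀ i, (N i).erase i ⊆ N (i + 1)

/-- The Grassmann necklace associated with a permutation `π`:
`N_i = { k : k ≤_i π⁻¹(k) }`. -/
def necklaceOf (π : Equiv.Perm (Fin n)) (i : Fin n) : Finset (Fin n) :=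
  Finset.univ.filter fun k => cpos i k ≤ cpos i (π.symm k)

lemma cpos_lt' (i x : Fin n) : cpos i x < n := (x - i).isLt

lemma cpos_eq_zero_iff' (i x : Fin n) : cpos i x = 0 ↔ x = i := by
  rw [cpos, ← Fin.val_zero n, Fin.val_eq_val, sub_eq_zero]

lemma fin_val_add_one' (a : Fin n) : ((a + 1 : Fin n) : ℕ) = ((a : ℕ) + 1) % n := by
  rw [Fin.add_def]
  simp [Fin.val_one', Nat.add_mod]

lemma cpos_succ' (i x : Fin n) (h : x ≠ i) : cpos i x = cpos (i + 1) x + 1 := by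
  have h1 : x - i = (x - (i + 1)) + 1 := by open Fin.CommRing in ring
  have h2 : cpos i x ≠ 0 := fun hh => h ((cpos_eq_zero_iff' i x).mp hh)
  have h3 := fin_val_add_one' (x - (i + 1))
  have h4 := (x - (i + 1)).isLt
  unfold cpos at h2 ⊢
  rw [h1, h3] at h2 ⊢
  rcases Nat.lt_or_ge ((x - (i + 1)).val + 1) n with hl | hl
  · rw [Nat.mod_eq_of_lt hl]
  · have hn : ((x - (i + 1)).val + 1) = n := by omega
    rw [hn, Nat.mod_self] at h2; omega

lemma cpos_self_succ' (i : Fin n) : cpos (i + 1) i = n - 1 := by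
  have h1 : (i - (i + 1)) + 1 = 0 := by open Fin.CommRing in ring
  have h3 := fin_val_add_one' (i - (i + 1))
  have h4 := (i - (i + 1)).isLt
  rw [h1] at h3
  simp only [Fin.val_zero] at h3
  unfold cpos
  rcases Nat.lt_or_ge ((i - (i + 1)).val + 1) n with hl | hl
  · rw [Nat.mod_eq_of_lt hl] at h3; omega
  · omega

lemma cpos_inj' (i : Fin n) {x y : Fin n} (h : cpos i x = cpos i y) : x = y := by
  have : x - i = y - i := Fin.val_injective h
  exact sub_left_injective this

lemma mem_necklaceOf' (π : Equiv.Perm (Fin n)) (i k : Fin n) :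
    k ∈ necklaceOf π i ↔ cpos i k ≤ cpos i (π.symm k) := by
  simp [necklaceOf]

lemma self_mem_necklaceOf' (π : Equiv.Perm (Fin n)) (i : Fin n) :
    i ∈ necklaceOf π i := by
  rw [mem_necklaceOf', (cpos_eq_zero_iff' i i).mpr rfl]
  exact Nat.zero_le _

lemma necklaceOf_succ' (π : Equiv.Perm (Fin n)) (i : Fin n) :
    necklaceOf π (i + 1) = insert (π i) ((necklaceOf π i).erase i) := by
  ext k
  simp only [mem_insert, mem_erase, mem_necklaceOf']
  constructor
  · intro hk
    by_cases hki : k = π i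
    · exact Or.inl hki
    · have hsk : π.symm k ≠ i := fun h => hki (by rw [← h, Equiv.apply_symm_apply])
      have hni : k ≠ i := by
        intro h
        subst h
        rw [cpos_self_succ'] at hk
        have := cpos_lt' (k + 1) (π.symm k)
        have heq : cpos (k + 1) (π.symm k) = cpos (k + 1) k := by
          rw [cpos_self_succ']; omega
        exact hsk (cpos_inj' _ heq)
      refine Or.inr ⟨hni, ?_⟩
      rw [cpos_succ' i k hni, cpos_succ' i (π.symm k) hsk]
      omega
  · rintro (rfl | ⟨hni, hk⟩)
    · rw [Equiv.symm_apply_apply, cpos_self_succ']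
      have := cpos_lt' (i + 1) (π i)
      omega
    · have hsk : π.symm k ≠ i := by
        intro h
        rw [h, (cpos_eq_zero_iff' i i).mpr rfl, Nat.le_zero, cpos_eq_zero_iff'] at hk
        exact hni hk
      rw [cpos_succ' i k hni, cpos_succ' i (π.symm k) hsk] at hk
      omega

lemma necklaceOf_card_succ' (π : Equiv.Perm (Fin n)) (i : Fin n) :
    (necklaceOf π (i + 1)).card = (necklaceOf π i).card := by
  rw [necklaceOf_succ']
  have hpi : π i ∉ (necklaceOf π i).erase i := by
    simp only [mem_erase, mem_necklaceOf', Equiv.symm_apply_apply,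
      (cpos_eq_zero_iff' i i).mpr rfl, Nat.le_zero, cpos_eq_zero_iff']
    tauto
  rw [card_insert_of_notMem hpi,
    card_erase_of_mem (self_mem_necklaceOf' π i)]
  have : 0 < (necklaceOf π i).card := card_pos.mpr ⟨i, self_mem_necklaceOf' π i⟩
  omega

/-- For any permutation `π`, the family `N_i = { k : k ≤_i π⁻¹(k) }`
is a Grassmann necklace: all its sets have a common cardinality `r` and
`N_i \\ {i} ⊆ N_{i+1}` for all `i`. -/
theorem necklaceOf_isNecklace (π : Equiv.Perm (Fin n)) :
    ∃ r : ℕ, IsNecklace (necklaceOf π) r := by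
  refine ⟨(necklaceOf π 0).card, ?_, ?_⟩
  open Fin.CommRing in
  · have key : ∀ m : ℕ, (necklaceOf π (m : Fin n)).card = (necklaceOf π 0).card := by
      intro m
      induction m with
      | zero => simp
      | succ k ih =>
        have : ((k + 1 : ℕ) : Fin n) = (k : Fin n) + 1 := by push_cast; ring
        rw [this, necklaceOf_card_succ', ih]
    intro i
    have := key (i : ℕ)
    rwa [Fin.cast_val_eq_self] at this
  · intro i
    rw [necklaceOf_succ']
    exact subset_insert _ _
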